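/- If a finite category C has skeletal Möbius inversion with ν_C the inverse of ζ_C in the corner algebra, then C has Euler characteristic equal to the sum of all values of ν_C: χ(C) = Σ_{x,y ∈ Obj(C)} ν_C(x,y). -/
import Mathlib


open CategoryTheory
open scoped Classical

universe u v

/-- Convolution product on the Möbius algebra of rational-valued functions
on pairs of objects of a finite category. -/
noncomputable def conv (C : Type u) [Category.{v} C] [Fintype C]
    (α β : C → C → ℚ) : C → C → ℚ :=
  fun x y => ∑ z : C, α x z * β z y

/-- The size of the isomorphism class of an object. -/
noncomputable def isoCard (C : Type u) [Category.{v} C] [Fintype C] (x : C) : ℚ :=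
  ((Finset.univ.filter fun z : C => Nonempty (x ≅ z)).card : ℚ)

/-- The idempotent `e_C` : `e_C(x,y) = 1/|[x]|` if `x ≅ y`, and `0` otherwise. -/
noncomputable def eFun (C : Type u) [Category.{v} C] [Fintype C] : C → C → ℚ :=
  fun x y => if Nonempty (x ≅ y) then 1 / isoCard C x else 0

/-- The zeta function of a finite category: `ζ_C(x,y) = |C(x,y)|`. -/
noncomputable def zeta (C : Type u) [Category.{v} C] [Fintype C]
    [∀ x y : C, Fintype (x ⟶ y)] : C → C → ℚ :=
  fun x y => (Fintype.card (x ⟶ y) : ℚ)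

/-- The Kronecker delta, the multiplicative identity of the Möbius algebra. -/
noncomputable def delta (C : Type u) [Category.{v} C] [Fintype C] : C → C → ℚ :=
  fun x y => if x = y then 1 else 0

/-- A weighting on a finite category: `Σ_y |C(x,y)| k(y) = 1` for all `x`. -/
def Weighting (C : Type u) [Category.{v} C] [Fintype C]
    [∀ x y : C, Fintype (x ⟶ y)] (k : C → ℚ) : Prop :=
  ∀ x : C, ∑ y : C, zeta C x y * k y = 1

/-- A coweighting on a finite category: `Σ_x k(x) |C(x,y)| = 1` for all `y`. -/
def Coweighting (C : Type u) [Category.{v} C] [Fintype C]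
    [∀ x y : C, Fintype (x ⟶ y)] (k : C → ℚ) : Prop :=
  ∀ y : C, ∑ x : C, k x * zeta C x y = 1

lemma isoCard_pos (C : Type u) [Category.{v} C] [Fintype C] (x : C) :
    0 < isoCard C x := by
  unfold isoCard
  have : x ∈ Finset.univ.filter fun z : C => Nonempty (x ≅ z) := by
    simp only [Finset.mem_filter, Finset.mem_univ, true_and]
    exact ⟨Iso.refl x⟩
  have h := Finset.card_pos.mpr ⟨x, this⟩
  exact_mod_cast h

lemma isoCard_congr (C : Type u) [Category.{v} C] [Fintype C] {x y : C}
    (h : Nonempty (x ≅ y)) : isoCard C x = isoCard C y := by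
  obtain ⟨i⟩ := h
  unfold isoCard
  congr 1
  congr 1
  ext z
  simp only [Finset.mem_filter, Finset.mem_univ, true_and]
  exact ⟨fun h => ⟨i.symm.trans h.some⟩, fun h => ⟨i.trans h.some⟩⟩

lemma sum_eFun_row (C : Type u) [Category.{v} C] [Fintype C] (x : C) :
    ∑ z : C, eFun C x z = 1 := by
  unfold eFun
  rw [Finset.sum_ite, Finset.sum_const, Finset.sum_const]
  simp only [smul_eq_mul, mul_zero, add_zero, nsmul_eq_mul]
  rw [show ((Finset.univ.filter fun z : C => Nonempty (x ≅ z)).card : ℚ) = isoCard C x from rfl]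
  rw [mul_one_div]; exact div_self (isoCard_pos C x).ne'

lemma sum_eFun_col (C : Type u) [Category.{v} C] [Fintype C] (y : C) :
    ∑ z : C, eFun C z y = 1 := by
  have key : ∀ z : C, eFun C z y = if Nonempty (y ≅ z) then 1 / isoCard C y else 0 := by
    intro z
    unfold eFun
    by_cases h : Nonempty (y ≅ z)
    · rw [if_pos h, if_pos ⟨h.some.symm⟩, isoCard_congr C ⟨h.some.symm⟩]
    · rw [if_neg h, if_neg (fun h' => h ⟨h'.some.symm⟩)]
  calc ∑ z : C, eFun C z y = ∑ z : C, if Nonempty (y ≅ z) then 1 / isoCard C y else 0 :=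
        Finset.sum_congr rfl fun z _ => key z
    _ = 1 := by
        rw [Finset.sum_ite, Finset.sum_const, Finset.sum_const]
        simp only [smul_eq_mul, mul_zero, add_zero, nsmul_eq_mul]
        rw [show ((Finset.univ.filter fun z : C => Nonempty (y ≅ z)).card : ℚ) = isoCard C y from rfl]
        rw [mul_one_div]; exact div_self (isoCard_pos C y).ne'

/-- if `C` has skeletal Möbius inversion with inverse `ν_C` of
`ζ_C` in the corner algebra, then `C` has Euler characteristic (it admits a
weighting and a coweighting) equal to the sum of all values of `ν_C`. -/
theorem euler_char_eq_sum_nu (C : Type u) [Category.{v} C] [Fintype C]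
    [∀ x y : C, Fintype (x ⟶ y)] (ν : C → C → ℚ)
    (hcorner : conv C (eFun C) (conv C ν (eFun C)) = ν)
    (hl : conv C (zeta C) ν = eFun C) (hr : conv C ν (zeta C) = eFun C) :
    ∃ k k' : C → ℚ, Weighting C k ∧ Coweighting C k' ∧
      (∑ x : C, k x) = ∑ x : C, ∑ y : C, ν x y ∧
      (∑ x : C, k' x) = ∑ x : C, ∑ y : C, ν x y := by
  refine ⟨fun y => ∑ z : C, ν y z, fun x => ∑ z : C, ν z x, ?_, ?_, rfl, ?_⟩
  · intro x
    have := congrFun (congrFun hl x)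
    calc ∑ y : C, zeta C x y * ∑ z : C, ν y z
        = ∑ z : C, ∑ y : C, zeta C x y * ν y z := by
          rw [Finset.sum_comm]
          exact Finset.sum_congr rfl fun y _ => Finset.mul_sum _ _ _
      _ = ∑ z : C, eFun C x z := Finset.sum_congr rfl fun z _ => this z
      _ = 1 := sum_eFun_row C x
  · intro y
    have := fun z => congrFun (congrFun hr z) y
    calc ∑ x : C, (∑ z : C, ν z x) * zeta C x y
        = ∑ z : C, ∑ x : C, ν z x * zeta C x y := by
          rw [Finset.sum_comm]
          exact Finset.sum_congr rfl fun x _ => Finset.sum_mul _ _ _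
      _ = ∑ z : C, eFun C z y := Finset.sum_congr rfl fun z _ => this z
      _ = 1 := sum_eFun_col C y
  · exact Finset.sum_comm
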